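/- Let n, k be positive integers and λ a partition inside an n×k rectangle, p ∈ {0,1}, a_i = λ_i + n - i + (p+1)/2. Then the rational expression M(λ,p) := (∏_{i=1}^{n} (2k+p+2i-2)! · (2a_i)) · (∏_{1≤i<j≤n} (a_i-a_j)(a_i+a_j)) / (∏_{i=1}^{n} (k+n-a_i+(p-1)/2)! (k+n+a_i+(p-1)/2)!) is a positive integer. -/

import Mathlib

open Finset

lemma fact_add (m t : ℕ) : (((m + t).factorial : ℚ)) =
    (m.factorial : ℚ) * ∏ i ∈ Finset.range t, ((m : ℚ) + i + 1) := by
  induction t with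
  | zero => simp
  | succ t ih =>
      rw [Finset.prod_range_succ, ← mul_assoc, ← ih, ← Nat.add_assoc, Nat.factorial_succ]
      push_cast
      ring

lemma aux_I1 (k p n j b : ℕ) (hj : j < n) (hb : b < k + n) :
    ((2*k+2*j+p).choose (k+j+p+b) : ℚ) * ((k+n-1-b).factorial * (k+n+b+p).factorial)
      = ((2*k+2*j+p).factorial : ℚ) *
        (((k:ℚ)+j+1+p+b) * ∏ s ∈ Finset.Ico (j+1) n, (((k:ℚ)+s-b) * ((k:ℚ)+s+1+p+b))) := by
  rcases le_or_gt b (k+j) with hbk | hbk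
  · have h1 : k+n-1-b = (k+j-b) + (n-1-j) := by omega
    have h2 : k+n+b+p = (k+j+p+b) + (n-j) := by omega
    have hch : ((2*k+2*j+p).choose (k+j+p+b) * (k+j+p+b).factorial * (k+j-b).factorial : ℕ)
        = (2*k+2*j+p).factorial := by
      have h := Nat.choose_mul_factorial_mul_factorial (show k+j+p+b ≤ 2*k+2*j+p by omega)
      have hsub : 2*k+2*j+p - (k+j+p+b) = k+j-b := by omega
      rwa [hsub] at h
    have hprod : (∏ i ∈ Finset.range (n-1-j), (((k+j-b : ℕ):ℚ) + i + 1))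
          * ∏ i ∈ Finset.range (n-j), (((k+j+p+b : ℕ):ℚ) + i + 1)
        = ((k:ℚ)+j+1+p+b) * ∏ s ∈ Finset.Ico (j+1) n, (((k:ℚ)+s-b) * ((k:ℚ)+s+1+p+b)) := by
      rw [Finset.prod_Ico_eq_prod_range]
      have hn1 : n - (j+1) = n-1-j := by omega
      have hn2 : n - j = (n-1-j) + 1 := by omega
      rw [hn1, hn2, Finset.prod_range_succ']
      rw [show (((k+j+p+b : ℕ):ℚ) + (0:ℕ) + 1) = ((k:ℚ)+j+1+p+b) by push_cast; ring]
      rw [mul_comm (∏ i ∈ Finset.range (n-1-j), (((k+j+p+b : ℕ):ℚ) + ↑(i+1) + 1)) _,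
        ← mul_assoc, mul_comm _ (((k:ℚ)+j+1+p+b)), mul_assoc, ← Finset.prod_mul_distrib]
      congr 1
      apply Finset.prod_congr rfl
      intro i _
      have hc : ((k+j-b : ℕ):ℚ) = (k:ℚ) + j - b := by
        push_cast [Nat.cast_sub (show b ≤ k+j by omega)]; ring
      rw [hc]
      push_cast
      ring
    calc ((2*k+2*j+p).choose (k+j+p+b) : ℚ) * ((k+n-1-b).factorial * (k+n+b+p).factorial)
        = ((2*k+2*j+p).choose (k+j+p+b) * (k+j+p+b).factorial * (k+j-b).factorial : ℕ)
          * ((∏ i ∈ Finset.range (n-1-j), (((k+j-b : ℕ):ℚ) + i + 1))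
          * ∏ i ∈ Finset.range (n-j), (((k+j+p+b : ℕ):ℚ) + i + 1)) := by
          rw [h1, h2, fact_add, fact_add]; push_cast; ring
      _ = ((2*k+2*j+p).factorial : ℚ) *
        (((k:ℚ)+j+1+p+b) * ∏ s ∈ Finset.Ico (j+1) n, (((k:ℚ)+s-b) * ((k:ℚ)+s+1+p+b))) := by
          rw [hch, hprod]
  · have hc : (2*k+2*j+p).choose (k+j+p+b) = 0 := Nat.choose_eq_zero_of_lt (by omega)
    have hmem : b - k ∈ Finset.Ico (j+1) n := by
      simp only [Finset.mem_Ico]; omega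
    have hz : (((k:ℚ)+((b-k:ℕ):ℚ)-b) * ((k:ℚ)+((b-k:ℕ):ℚ)+1+p+b)) = 0 := by
      have : ((b-k:ℕ):ℚ) = (b:ℚ) - k := by
        push_cast [Nat.cast_sub (show k ≤ b by omega)]; ring
      rw [this]; ring_nf
    rw [hc, Finset.prod_eq_zero hmem hz]
    simp

lemma aux_I2 (k p n j b : ℕ) (hj : j < n) (hb : b < k + n) :
    ((2*k+2*j+p).choose (k+j+p+1+b) : ℚ) * ((k+n-1-b).factorial * (k+n+b+p).factorial)
      = ((2*k+2*j+p).factorial : ℚ) *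
        (((k:ℚ)+j-b) * ∏ s ∈ Finset.Ico (j+1) n, (((k:ℚ)+s-b) * ((k:ℚ)+s+1+p+b))) := by
  rcases lt_or_ge b (k+j) with hbk | hbk
  · -- b ≤ k+j-1
    have h1 : k+n-1-b = (k+j-1-b) + (n-j) := by omega
    have h2 : k+n+b+p = (k+j+p+1+b) + (n-1-j) := by omega
    have hch : ((2*k+2*j+p).choose (k+j+p+1+b) * (k+j+p+1+b).factorial * (k+j-1-b).factorial : ℕ)
        = (2*k+2*j+p).factorial := by
      have h := Nat.choose_mul_factorial_mul_factorial (show k+j+p+1+b ≤ 2*k+2*j+p by omega)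
      have hsub : 2*k+2*j+p - (k+j+p+1+b) = k+j-1-b := by omega
      rwa [hsub] at h
    have hprod : (∏ i ∈ Finset.range (n-j), (((k+j-1-b : ℕ):ℚ) + i + 1))
          * ∏ i ∈ Finset.range (n-1-j), (((k+j+p+1+b : ℕ):ℚ) + i + 1)
        = ((k:ℚ)+j-b) * ∏ s ∈ Finset.Ico (j+1) n, (((k:ℚ)+s-b) * ((k:ℚ)+s+1+p+b)) := by
      rw [Finset.prod_Ico_eq_prod_range]
      have hn1 : n - (j+1) = n-1-j := by omega
      have hn2 : n - j = (n-1-j) + 1 := by omega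
      rw [hn1, hn2, Finset.prod_range_succ']
      have hcast : ((k+j-1-b : ℕ):ℚ) = (k:ℚ)+j-1-b := by
        push_cast [Nat.cast_sub (show b ≤ k+j-1 by omega),
          Nat.cast_sub (show 1 ≤ k+j by omega)]; ring
      rw [show (((k+j-1-b : ℕ):ℚ) + (0:ℕ) + 1) = ((k:ℚ)+j-b) by rw [hcast]; push_cast; ring]
      rw [mul_comm (∏ i ∈ Finset.range (n-1-j), (((k+j-1-b : ℕ):ℚ) + ↑(i+1) + 1)) _,
        mul_assoc, ← Finset.prod_mul_distrib]
      congr 1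
      apply Finset.prod_congr rfl
      intro i _
      rw [hcast]
      push_cast
      ring
    calc ((2*k+2*j+p).choose (k+j+p+1+b) : ℚ) * ((k+n-1-b).factorial * (k+n+b+p).factorial)
        = ((2*k+2*j+p).choose (k+j+p+1+b) * (k+j+p+1+b).factorial * (k+j-1-b).factorial : ℕ)
          * ((∏ i ∈ Finset.range (n-j), (((k+j-1-b : ℕ):ℚ) + i + 1))
          * ∏ i ∈ Finset.range (n-1-j), (((k+j+p+1+b : ℕ):ℚ) + i + 1)) := by
          rw [h1, h2, fact_add, fact_add]; push_cast; ring
      _ = _ := by rw [hch, hprod]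
  · -- b ≥ k+j
    have hc : (2*k+2*j+p).choose (k+j+p+1+b) = 0 := Nat.choose_eq_zero_of_lt (by omega)
    rw [hc]
    rcases eq_or_lt_of_le hbk with hbe | hblt
    · rw [show ((k:ℚ)+j-b) = 0 by rw [← hbe]; push_cast; ring]
      simp
    · have hmem : b - k ∈ Finset.Ico (j+1) n := by
        simp only [Finset.mem_Ico]; omega
      have hz : (((k:ℚ)+((b-k:ℕ):ℚ)-b) * ((k:ℚ)+((b-k:ℕ):ℚ)+1+p+b)) = 0 := by
        have : ((b-k:ℕ):ℚ) = (b:ℚ) - k := by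
          push_cast [Nat.cast_sub (show k ≤ b by omega)]; ring
        rw [this]; ring_nf
      rw [Finset.prod_eq_zero hmem hz]
      simp

lemma aux_det (n : ℕ) (C : ℕ → ℚ) (q : Fin n → ℚ) :
    ∃ ε : ℚ, (ε = 1 ∨ ε = -1) ∧
      Matrix.det (Matrix.of fun i j : Fin n => ∏ s ∈ Finset.Ico ((j:ℕ)+1) n, (C s - q i))
        = ε * ∏ i : Fin n, ∏ j ∈ Finset.Ioi i, (q j - q i) := by
  classical
  set P : Fin n → Polynomial ℚ :=
    fun j => ∏ s ∈ Finset.Ico (n - (j:ℕ)) n, (Polynomial.X - Polynomial.C (C s)) with hP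
  have hmonic : ∀ j, (P j).Monic := by
    intro j
    exact Polynomial.monic_prod_of_monic _ _ fun s _ => Polynomial.monic_X_sub_C _
  have hdeg : ∀ j : Fin n, (P j).natDegree = (j : ℕ) := by
    intro j
    rw [hP, Polynomial.natDegree_prod _ _ (fun s _ => Polynomial.X_sub_C_ne_zero _)]
    simp only [Polynomial.natDegree_X_sub_C]
    rw [Finset.sum_const, Nat.card_Ico, smul_eq_mul, mul_one]
    omega
  have hvd := Matrix.det_eval_matrixOfPolynomials_eq_det_vandermonde q P hdeg hmonic
  set E : Matrix (Fin n) (Fin n) ℚ := Matrix.of fun i j => (P j).eval (q i) with hE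
  have hentry : (Matrix.of fun i j : Fin n => ∏ s ∈ Finset.Ico ((j:ℕ)+1) n, (C s - q i))
      = Matrix.of fun i j : Fin n =>
        ((-1:ℚ)^(n-1-(j:ℕ))) * (E.submatrix id Fin.revPerm) i j := by
    ext i j
    simp only [Matrix.of_apply, Matrix.submatrix_apply, id_eq, hE, hP, Fin.revPerm_apply]
    rw [Polynomial.eval_prod]
    have hrev : n - ((Fin.rev j : Fin n) : ℕ) = (j:ℕ) + 1 := by
      rw [Fin.val_rev]; omega
    rw [hrev]
    have hcard : (Finset.Ico ((j:ℕ)+1) n).card = n - 1 - (j:ℕ) := by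
      rw [Nat.card_Ico]; omega
    rw [← hcard, ← Finset.prod_const, ← Finset.prod_mul_distrib]
    apply Finset.prod_congr rfl
    intro s _
    simp only [Polynomial.eval_sub, Polynomial.eval_X, Polynomial.eval_C]
    ring
  refine ⟨(∏ j : Fin n, ((-1:ℚ)^(n-1-(j:ℕ)))) * ((Equiv.Perm.sign (Fin.revPerm (n := n)) : ℤ) : ℚ),
    ?_, ?_⟩
  · rw [Finset.prod_pow_eq_pow_sum]
    rcases Int.units_eq_one_or (Equiv.Perm.sign (Fin.revPerm (n := n))) with h | h <;>
      rw [h] <;>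
      rcases Nat.even_or_odd (∑ j : Fin n, (n-1-(j:ℕ))) with he | he <;>
      simp [he.neg_one_pow] <;> simp [Odd.neg_one_pow he]
  · rw [hentry, Matrix.det_mul_row, Matrix.det_permute', ← hvd, Matrix.det_vandermonde]
    push_cast
    ring

theorem aux_main (n k p : ℕ) (b : Fin n → ℕ)
    (hmono : ∀ i j : Fin n, i < j → b j < b i)
    (hbd : ∀ i, b i < k + n) :
    ∃ N : ℕ, 0 < N ∧
      (∏ i : Fin n, ((2 * k + p + 2 * (i : ℕ)).factorial : ℚ) * (2 * (b i : ℚ) + p + 1))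
        * (∏ i : Fin n, ∏ j ∈ Finset.Ioi i,
            ((b i : ℚ) - (b j : ℚ)) * ((b i : ℚ) + (b j : ℚ) + p + 1))
        / (∏ i : Fin n, ((k + n - 1 - b i).factorial : ℚ) * ((k + n + b i + p).factorial : ℚ))
      = (N : ℚ) := by
  classical
  set q : Fin n → ℚ := fun i => (b i : ℚ) * ((b i : ℚ) + p + 1) with hq
  set Cc : ℕ → ℚ := fun s => ((k:ℚ)+s) * ((k:ℚ)+s+p+1) with hC
  set B : Matrix (Fin n) (Fin n) ℤ := Matrix.of fun i j =>
    ((2*k+2*(j:ℕ)+p).choose (k+(j:ℕ)+p+ b i) : ℤ)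
      - ((2*k+2*(j:ℕ)+p).choose (k+(j:ℕ)+p+1+ b i) : ℤ) with hB
  have hdpos : ∀ i : Fin n,
      (0:ℚ) < ((k+n-1-b i).factorial : ℚ) * ((k+n+b i+p).factorial : ℚ) := by
    intro i; positivity
  have hentry : ∀ i j : Fin n, ((B i j : ℤ) : ℚ) =
      ((2*(b i:ℚ)+p+1) / (((k+n-1-b i).factorial : ℚ) * ((k+n+b i+p).factorial : ℚ)))
        * (((2*k+2*(j:ℕ)+p).factorial : ℚ)
            * ∏ s ∈ Finset.Ico ((j:ℕ)+1) n, (Cc s - q i)) := by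
    intro i j
    have hR : ∏ s ∈ Finset.Ico ((j:ℕ)+1) n, (Cc s - q i)
        = ∏ s ∈ Finset.Ico ((j:ℕ)+1) n, (((k:ℚ)+s-(b i)) * ((k:ℚ)+s+1+p+(b i))) :=
      Finset.prod_congr rfl fun s _ => by rw [hq, hC]; ring
    rw [hR, div_mul_eq_mul_div, eq_div_iff (ne_of_gt (hdpos i))]
    have h1 := aux_I1 k p n j (b i) j.isLt (hbd i)
    have h2 := aux_I2 k p n j (b i) j.isLt (hbd i)
    have hBij : ((B i j : ℤ) : ℚ)
        = ((2*k+2*(j:ℕ)+p).choose (k+(j:ℕ)+p+ b i) : ℚ)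
          - ((2*k+2*(j:ℕ)+p).choose (k+(j:ℕ)+p+1+ b i) : ℚ) := by
      rw [hB]; push_cast [Matrix.of_apply]; ring
    rw [hBij, sub_mul, h1, h2]
    ring
  obtain ⟨ε, hε, hdet⟩ := aux_det n Cc q
  have hdetq : (B.det : ℚ)
      = ((∏ i : Fin n, ((2*(b i:ℚ)+p+1)
            / (((k+n-1-b i).factorial : ℚ) * ((k+n+b i+p).factorial : ℚ))))
          * ((∏ j : Fin n, ((2*k+2*(j:ℕ)+p).factorial : ℚ))
            * (ε * ∏ i : Fin n, ∏ j ∈ Finset.Ioi i, (q j - q i)))) := by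
    have h0 : ((Int.castRingHom ℚ) B.det) = (B.map (Int.castRingHom ℚ)).det :=
      RingHom.map_det (Int.castRingHom ℚ) B
    have h1 : B.map (Int.castRingHom ℚ)
        = Matrix.of fun i j : Fin n =>
            ((2*(b i:ℚ)+p+1)
              / (((k+n-1-b i).factorial : ℚ) * ((k+n+b i+p).factorial : ℚ)))
            * ((Matrix.of fun i j : Fin n => (((2*k+2*(j:ℕ)+p).factorial : ℚ))
                * ((Matrix.of fun i j : Fin n =>
                    ∏ s ∈ Finset.Ico ((j:ℕ)+1) n, (Cc s - q i)) i j)) i j) := by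
      ext i j
      simp only [Matrix.map_apply, Matrix.of_apply, eq_intCast, Int.cast_id]
      exact hentry i j
    have h2 := Matrix.det_mul_column
      (fun i : Fin n => ((2*(b i:ℚ)+p+1)
        / (((k+n-1-b i).factorial : ℚ) * ((k+n+b i+p).factorial : ℚ))))
      (Matrix.of fun i j : Fin n => (((2*k+2*(j:ℕ)+p).factorial : ℚ))
        * ((Matrix.of fun i j : Fin n =>
            ∏ s ∈ Finset.Ico ((j:ℕ)+1) n, (Cc s - q i)) i j))
    have h3 := Matrix.det_mul_row
      (fun j : Fin n => (((2*k+2*(j:ℕ)+p).factorial : ℚ)))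
      (Matrix.of fun i j : Fin n => ∏ s ∈ Finset.Ico ((j:ℕ)+1) n, (Cc s - q i))
    calc (B.det : ℚ) = ((Int.castRingHom ℚ) B.det) := rfl
      _ = (B.map (Int.castRingHom ℚ)).det := h0
      _ = _ := by rw [h1, h2, h3, hdet]
  have hPhi : (∏ i : Fin n, ∏ j ∈ Finset.Ioi i, (q j - q i))
      = (∏ i : Fin n, (-1:ℚ)^((Finset.Ioi i).card)) *
        (∏ i : Fin n, ∏ j ∈ Finset.Ioi i,
          ((b i : ℚ) - (b j : ℚ)) * ((b i : ℚ) + (b j : ℚ) + p + 1)) := by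
    rw [← Finset.prod_mul_distrib]
    refine Finset.prod_congr rfl fun i _ => ?_
    rw [← Finset.prod_const, ← Finset.prod_mul_distrib]
    refine Finset.prod_congr rfl fun j _ => ?_
    simp only [hq]
    ring
  set εv : ℚ := ∏ i : Fin n, (-1:ℚ)^((Finset.Ioi i).card) with hεvdef
  have hεv : εv = 1 ∨ εv = -1 := by
    rw [hεvdef, Finset.prod_pow_eq_pow_sum]
    rcases Nat.even_or_odd (∑ i : Fin n, (Finset.Ioi i).card) with he | he
    · left; exact he.neg_one_pow
    · right; exact he.neg_one_pow
  set V : ℚ := ∏ i : Fin n, ∏ j ∈ Finset.Ioi i,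
      ((b i : ℚ) - (b j : ℚ)) * ((b i : ℚ) + (b j : ℚ) + p + 1) with hV
  set A : ℚ := ∏ i : Fin n,
      ((2 * k + p + 2 * (i : ℕ)).factorial : ℚ) * (2 * (b i : ℚ) + p + 1) with hA
  set D : ℚ := ∏ i : Fin n,
      ((k + n - 1 - b i).factorial : ℚ) * ((k + n + b i + p).factorial : ℚ) with hD
  have hA' : A = (∏ j : Fin n, ((2*k+2*(j:ℕ)+p).factorial : ℚ))
      * ∏ i : Fin n, (2*(b i:ℚ)+p+1) := by
    rw [hA, ← Finset.prod_mul_distrib]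
    refine Finset.prod_congr rfl fun i _ => ?_
    rw [show 2*k+p+2*(i:ℕ) = 2*k+2*(i:ℕ)+p from by omega]
  have hDpos : 0 < D := Finset.prod_pos fun i _ => hdpos i
  have hApos : 0 < A := Finset.prod_pos fun i _ => by positivity
  have hVpos : 0 < V := Finset.prod_pos fun i _ => Finset.prod_pos fun j hj =>
    mul_pos (sub_pos.mpr (by exact_mod_cast hmono i j (Finset.mem_Ioi.mp hj)))
      (by positivity)
  have hTpos : 0 < A * V / D := div_pos (mul_pos hApos hVpos) hDpos
  have hu : (∏ i : Fin n, ((2*(b i:ℚ)+p+1)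
        / (((k+n-1-b i).factorial : ℚ) * ((k+n+b i+p).factorial : ℚ))))
      = (∏ i : Fin n, (2*(b i:ℚ)+p+1)) / D := by
    rw [hD, Finset.prod_div_distrib]
  have key : (B.det : ℚ) = (ε * εv) * (A * V / D) := by
    rw [hdetq, hPhi, hu, hA']
    field_simp
  have hζ : ε * εv = 1 ∨ ε * εv = -1 := by
    rcases hε with h | h <;> rcases hεv with h' | h' <;> rw [h, h'] <;> norm_num
  rcases hζ with h | h
  · rw [h, one_mul] at key
    have h0 : (0:ℚ) < (B.det : ℚ) := key ▸ hTpos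
    have h0' : 0 < B.det := by exact_mod_cast h0
    refine ⟨B.det.toNat, by omega, ?_⟩
    rw [← key]
    exact_mod_cast (Int.toNat_of_nonneg h0'.le).symm
  · rw [h] at key
    have h0 : (B.det : ℚ) < 0 := by rw [key]; nlinarith
    have h0' : B.det < 0 := by exact_mod_cast h0
    refine ⟨(-B.det).toNat, by omega, ?_⟩
    have : A * V / D = ((-B.det : ℤ) : ℚ) := by rw [Int.cast_neg, key]; ring
    rw [this]
    exact_mod_cast congrArg (fun z : ℤ => (z : ℚ)) (Int.toNat_of_nonneg (by omega : (0:ℤ) ≤ -B.det)).symm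

/-- Type `BC` product formula positivity: for `p ∈ {0,1}` and a partition `λ` inside
an `n × k` rectangle (`l i = λ_{i+1}`), with `a_i = λ_i + (n-i) + (p+1)/2` (writing
`b_i = λ_i + n - i`, so `2a_i = 2b_i + p + 1`, `a_i ± a_j = b_i ± b_j (+ p + 1)`,
`k+n-a_i+(p-1)/2 = k - λ_i + i - 1` and `k+n+a_i+(p-1)/2 = k+n+b_i+p`), the rational
number `M(λ,p) = ∏_i (2k+p+2i-2)! (2a_i) ∏_{i<j}(a_i-a_j)(a_i+a_j)
  / ∏_i (k+n-a_i+(p-1)/2)! (k+n+a_i+(p-1)/2)!` is a positive integer. -/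
theorem stmt14 (n k : ℕ) (hn : 0 < n) (hk : 0 < k) (p : ℕ) (hp : p ≤ 1)
    (l : Fin n → ℕ)
    (hl : ∀ i j : Fin n, i ≤ j → l j ≤ l i) (hbd : ∀ i, l i ≤ k) :
    ∃ N : ℕ, 0 < N ∧
      (∏ i : Fin n, ((2 * k + p + 2 * (i : ℕ)).factorial : ℚ)
          * (2 * ((l i + (n - 1 - (i : ℕ))) : ℚ) + p + 1))
        * (∏ i : Fin n, ∏ j ∈ Finset.Ioi i,
            (((l i + (n - 1 - (i : ℕ))) : ℚ) - ((l j + (n - 1 - (j : ℕ))) : ℚ))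
              * (((l i + (n - 1 - (i : ℕ))) : ℚ) + ((l j + (n - 1 - (j : ℕ))) : ℚ)
                  + p + 1))
        / (∏ i : Fin n, ((k - l i + (i : ℕ)).factorial : ℚ)
            * ((k + 2 * n - 1 - (i : ℕ) + l i + p).factorial : ℚ))
      = (N : ℚ) := by
  obtain ⟨N, hN, hEq⟩ := aux_main n k p (fun i => l i + (n - 1 - (i:ℕ)))
    (fun i j hij => by
      have h1 := hl i j hij.le
      have h2 : (i:ℕ) < (j:ℕ) := hij
      have h3 := j.isLt
      omega)
    (fun i => by
      have h1 := hbd i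
      have h2 := i.isLt
      omega)
  refine ⟨N, hN, Eq.trans ?_ hEq⟩
  have hDeq : (∏ i : Fin n, ((k - l i + (i : ℕ)).factorial : ℚ)
        * ((k + 2 * n - 1 - (i : ℕ) + l i + p).factorial : ℚ))
      = ∏ i : Fin n,
        ((k + n - 1 - (l i + (n - 1 - (i:ℕ)))).factorial : ℚ)
          * ((k + n + (l i + (n - 1 - (i:ℕ))) + p).factorial : ℚ) := by
    refine Finset.prod_congr rfl fun i _ => ?_
    have hi := i.isLt
    have hbi := hbd i
    have h1 : k - l i + (i:ℕ) = k + n - 1 - (l i + (n - 1 - (i:ℕ))) := by omega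
    have h2 : k + 2*n - 1 - (i:ℕ) + l i + p = k + n + (l i + (n - 1 - (i:ℕ))) + p := by omega
    rw [h1, h2]
  rw [hDeq]
  have hcast : ∀ i : Fin n, ((l i + (n - 1 - (i:ℕ)) : ℕ) : ℚ)
      = (l i : ℚ) + ((n:ℚ) - 1 - ((i:ℕ):ℚ)) := by
    intro i
    have hi := i.isLt
    push_cast [Nat.cast_sub (show (i:ℕ) ≤ n - 1 by omega),
      Nat.cast_sub (show 1 ≤ n by omega)]
    ring
  congr 1
  congr 1
  · exact Finset.prod_congr rfl fun i _ => by rw [hcast i]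
  · exact Finset.prod_congr rfl fun i _ =>
      Finset.prod_congr rfl fun j _ => by rw [hcast i, hcast j]
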